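/- For every h₀ ∈ L^∞(ℝ^d × ℝ) and every sequence (ε_m) of positive real numbers with ε_m → 0, there exists a subsequence (still denoted ε_m) such that for almost every y ∈ ℝ^d one has ∫_K |h₀(y + √(ε_m)·x̄ + ε_m·x̃, λ) − h₀(y, λ)| d(x,λ) → 0 as m → ∞ for every compact set K ⊆ ℝ^d × ℝ, where for x = (x_1,…,x_d) ∈ ℝ^d one writes x̄ = (x_1,…,x_k,0,…,0) and x̃ = (0,…,0,x_{k+1},…,x_d). -/

import Mathlib

open MeasureTheory Filter Topology
open scoped ENNReal

/-- Continuity of translation in `L¹(ℝⁿ)`: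
if `f` is integrable then `∫ |f (y + v) - f y| dy → 0` as `v → 0`. -/
lemma l1_translation_tendsto {n : ℕ} {f : (Fin n → ℝ) → ℝ} (hf : Integrable f) :
    Tendsto (fun v : Fin n → ℝ => ∫ y, |f (y + v) - f y|) (𝓝 0) (𝓝 0) := by
  have hpm : ∀ v : Fin n → ℝ,
      MeasurePreserving (fun y : Fin n → ℝ => y + v) volume volume :=
    fun v => measurePreserving_add_right volume v
  set F : Lp ℝ 1 (volume : Measure (Fin n → ℝ)) := hf.toL1 f with hF
  set g : (Fin n → ℝ) → C(Fin n → ℝ, Fin n → ℝ) :=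
    fun v => ⟨fun y => y + v, by continuity⟩ with hg
  have hgc : Continuous g :=
    ContinuousMap.continuous_of_continuous_uncurry _ (by
      exact continuous_snd.add continuous_fst)
  have h := Filter.Tendsto.compMeasurePreservingLp
    (tendsto_const_nhds : Tendsto (fun _ : Fin n → ℝ => F) (𝓝 0) (𝓝 F))
    (hgc.tendsto 0) (fun v => hpm v) (hpm 0) (by norm_num)
  rw [tendsto_iff_norm_sub_tendsto_zero] at h
  refine h.congr fun v => ?_
  have hco : ∀ v : Fin n → ℝ,
      (Lp.compMeasurePreserving (g v) (hpm v) F : (Fin n → ℝ) → ℝ)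
        =ᵐ[volume] fun y => f (y + v) := by
    intro v
    refine (Lp.coeFn_compMeasurePreserving F (hpm v)).trans ?_
    have : (F : (Fin n → ℝ) → ℝ) =ᵐ[volume] f := hf.coeFn_toL1
    exact (hpm v).quasiMeasurePreserving.ae_eq_comp this
  have heq : ‖Lp.compMeasurePreserving (g v) (hpm v) F
      - Lp.compMeasurePreserving (g 0) (hpm 0) F‖ = ∫ y, |f (y + v) - f y| := by
    rw [L1.norm_eq_integral_norm]
    refine integral_congr_ae ?_
    filter_upwards [Lp.coeFn_sub (Lp.compMeasurePreserving (g v) (hpm v) F)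
      (Lp.compMeasurePreserving (g 0) (hpm 0) F), hco v, hco 0] with y h1 h2 h3
    simp only [h1, Pi.sub_apply, h2, h3, add_zero, Real.norm_eq_abs]
  exact heq

theorem stmt1 (d k : ℕ) (hd : 1 ≤ d) (hk1 : 1 ≤ k) (hkd : k ≤ d)
    (h₀ : (Fin d → ℝ) → ℝ → ℝ)
    (hmeas : Measurable (Function.uncurry h₀))
    (hbdd : ∃ C : ℝ, ∀ (x : Fin d → ℝ) (l : ℝ), |h₀ x l| ≤ C)
    (ε : ℕ → ℝ) (hε : ∀ m, 0 < ε m) (hε0 : Tendsto ε atTop (nhds 0)) :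
    ∃ ψ : ℕ → ℕ, StrictMono ψ ∧
      ∀ᵐ y : Fin d → ℝ, ∀ K : Set ((Fin d → ℝ) × ℝ), IsCompact K →
        Tendsto (fun m => ∫ p in K,
            |h₀ (fun i => y i
                  + (if (i : ℕ) < k then Real.sqrt (ε (ψ m)) else ε (ψ m)) * p.1 i) p.2
              - h₀ y p.2|)
          atTop (nhds 0) := by
  classical
  obtain ⟨C₀, hC₀⟩ := hbdd
  set C : ℝ := max C₀ 0 with hCdef
  have hC : ∀ x l, |h₀ x l| ≤ C := fun x l => (hC₀ x l).trans (le_max_left _ _)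
  have hC0 : 0 ≤ C := le_max_right _ _
  -- the scaling vectors
  set s : ℕ → Fin d → ℝ :=
    fun m i => if (i : ℕ) < k then Real.sqrt (ε m) else ε m with hsdef
  have hs0 : Tendsto s atTop (𝓝 0) := by
    rw [tendsto_pi_nhds]
    intro i
    by_cases h : (i : ℕ) < k
    · have : Tendsto (fun m => Real.sqrt (ε m)) atTop (𝓝 0) := by
        have := (Real.continuous_sqrt.tendsto 0).comp hε0
        simpa [Real.sqrt_zero, Function.comp_def] using this
      simpa [hsdef, h] using this
    · simpa [hsdef, h] using hε0
  -- weights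
  set u : ℝ → ℝ := fun t => (1 + t ^ 2)⁻¹ with hudef
  have hu_cont : Continuous u :=
    (continuous_const.add (continuous_pow 2)).inv₀ (fun t => (show (0:ℝ) < 1 + t ^ 2 by positivity).ne')
  have hu_pos : ∀ t, 0 < u t := fun t => by positivity
  have hu_int : Integrable u := integrable_inv_one_add_sq
  set w : (Fin d → ℝ) → ℝ := fun y => ∏ i, u (y i) with hwdef
  have hw_cont : Continuous w := by
    apply continuous_finset_prod
    exact fun i _ => hu_cont.comp (continuous_apply i)
  have hw_pos : ∀ y, 0 < w y := fun y => Finset.prod_pos fun i _ => hu_pos _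
  have hw_int : Integrable w := Integrable.fintype_prod (f := fun _ : Fin d => u) fun i => hu_int
  set W : ((Fin d → ℝ) × ℝ) → ℝ := fun p => w p.1 * u p.2 with hWdef
  have hW_cont : Continuous W := (hw_cont.comp continuous_fst).mul (hu_cont.comp continuous_snd)
  have hW_pos : ∀ p, 0 < W p := fun p => mul_pos (hw_pos _) (hu_pos _)
  have hW_int : Integrable W := by
    rw [show (volume : Measure ((Fin d → ℝ) × ℝ)) = volume.prod volume from rfl]
    exact hw_int.mul_prod hu_int
  -- the difference function
  set g : ((Fin d → ℝ) × ℝ) → ℝ := Function.uncurry h₀ with hgdef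
  have hgC : ∀ p, |g p| ≤ C := fun p => hC p.1 p.2
  set Δ : ℕ → (Fin d → ℝ) → ((Fin d → ℝ) × ℝ) → ℝ :=
    fun m y p => |g (y + s m * p.1, p.2) - g (y, p.2)| with hΔdef
  have hΔ_nonneg : ∀ m y p, 0 ≤ Δ m y p := fun m y p => abs_nonneg _
  have hΔ_bdd : ∀ m y p, Δ m y p ≤ 2 * C := by
    intro m y p
    calc Δ m y p ≤ |g (y + s m * p.1, p.2)| + |g (y, p.2)| := abs_sub _ _
    _ ≤ C + C := add_le_add (hgC _) (hgC _)
    _ = 2 * C := by ring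
  have hmeasΔ2 : ∀ m,
      Measurable fun q : (Fin d → ℝ) × ((Fin d → ℝ) × ℝ) => Δ m q.1 q.2 := by
    intro m
    apply Measurable.abs
    apply Measurable.sub
    · exact hmeas.comp
        ((measurable_fst.add (measurable_const.mul
          (measurable_fst.comp measurable_snd))).prodMk (measurable_snd.comp measurable_snd))
    · exact hmeas.comp (measurable_fst.prodMk (measurable_snd.comp measurable_snd))
  have hmeasΔ : ∀ m y, Measurable (Δ m y) := by
    intro m y
    exact (hmeasΔ2 m).comp (measurable_const.prodMk measurable_id)
  -- the master function Φ
  set Φ : ℕ → (Fin d → ℝ) → ℝ := fun m y => ∫ p, W p * Δ m y p with hΦdef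
  have hint_WΔ : ∀ m y, Integrable (fun p => W p * Δ m y p) := by
    intro m y
    refine (hW_int.mul_const (2 * C)).mono'
      ((hW_cont.measurable.mul (hmeasΔ m y)).aestronglyMeasurable) (ae_of_all _ fun p => ?_)
    rw [Real.norm_eq_abs, abs_mul, abs_of_nonneg (hW_pos p).le, abs_of_nonneg (hΔ_nonneg m y p)]
    exact mul_le_mul_of_nonneg_left (hΔ_bdd m y p) (hW_pos p).le
  have hΦ_nonneg : ∀ m y, 0 ≤ Φ m y :=
    fun m y => integral_nonneg fun p => mul_nonneg (hW_pos p).le (hΔ_nonneg m y p)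
  have hΦ_bdd : ∀ m y, Φ m y ≤ (∫ p, W p) * (2 * C) := by
    intro m y
    calc Φ m y ≤ ∫ p, W p * (2 * C) := by
          refine integral_mono (hint_WΔ m y) (hW_int.mul_const _) fun p => ?_
          exact mul_le_mul_of_nonneg_left (hΔ_bdd m y p) (hW_pos p).le
    _ = (∫ p, W p) * (2 * C) := by rw [integral_mul_const]
  have hΦ_meas : ∀ m, StronglyMeasurable (Φ m) := by
    intro m
    have : Measurable fun q : (Fin d → ℝ) × ((Fin d → ℝ) × ℝ) => W q.2 * Δ m q.1 q.2 :=
      (hW_cont.measurable.comp measurable_snd).mul (hmeasΔ2 m)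
    exact this.stronglyMeasurable.integral_prod_right'
  -- integrability of translates
  have hh₀l : ∀ l : ℝ, Measurable fun y => h₀ y l := by
    intro l
    exact hmeas.comp (measurable_id.prodMk measurable_const)
  have hG_int : ∀ l : ℝ, Integrable (fun y => w y * h₀ y l) := by
    intro l
    refine (hw_int.mul_const C).mono'
      (hw_cont.measurable.mul (hh₀l l)).aestronglyMeasurable (ae_of_all _ fun y => ?_)
    rw [Real.norm_eq_abs, abs_mul, abs_of_nonneg (hw_pos y).le]
    exact mul_le_mul_of_nonneg_left (hC y l) (hw_pos y).le
  -- the pointwise translation estimate, integrated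
  have hv : ∀ x : Fin d → ℝ, Tendsto (fun m => s m * x) atTop (𝓝 0) := by
    intro x
    have := hs0.mul (tendsto_const_nhds (x := x) (f := atTop))
    simpa using this
  have hφ_tendsto : ∀ x : Fin d → ℝ, ∀ l : ℝ,
      Tendsto (fun m => ∫ y, w y * Δ m y (x, l)) atTop (𝓝 0) := by
    intro x l
    have hT1 : Tendsto (fun m => ∫ y,
        |w (y + s m * x) * h₀ (y + s m * x) l - w y * h₀ y l|) atTop (𝓝 0) :=
      (l1_translation_tendsto (hG_int l)).comp (hv x)
    have hT2 : Tendsto (fun m => ∫ y, |w (y + s m * x) - w y|) atTop (𝓝 0) :=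
      (l1_translation_tendsto hw_int).comp (hv x)
    have hRHS : Tendsto (fun m => (∫ y,
        |w (y + s m * x) * h₀ (y + s m * x) l - w y * h₀ y l|)
        + C * ∫ y, |w (y + s m * x) - w y|) atTop (𝓝 0) := by
      have := hT1.add (hT2.const_mul C)
      simpa using this
    refine tendsto_of_tendsto_of_tendsto_of_le_of_le tendsto_const_nhds hRHS
      (fun m => integral_nonneg fun y => mul_nonneg (hw_pos y).le (hΔ_nonneg m y (x, l)))
      (fun m => ?_)
    -- pointwise bound and integral monotonicity
    set v : Fin d → ℝ := s m * x with hvdef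
    have hint1 : Integrable fun y => |w (y + v) * h₀ (y + v) l - w y * h₀ y l| := by
      have h1 : Integrable fun y => w (y + v) * h₀ (y + v) l := by
        have := ((measurePreserving_add_right (volume : Measure (Fin d → ℝ)) v).integrable_comp
          (hG_int l).aestronglyMeasurable).2 (hG_int l)
        exact this
      exact (h1.sub (hG_int l)).abs
    have hint2 : Integrable fun y => |w (y + v) - w y| := by
      have h1 : Integrable fun y => w (y + v) := by
        have := ((measurePreserving_add_right (volume : Measure (Fin d → ℝ)) v).integrable_comp
          hw_int.aestronglyMeasurable).2 hw_int
        exact this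
      exact (h1.sub hw_int).abs
    have hlhs_int : Integrable fun y => w y * Δ m y (x, l) := by
      refine (hw_int.mul_const (2 * C)).mono'
        (hw_cont.measurable.mul ((hmeasΔ2 m).comp
          (measurable_id.prodMk measurable_const))).aestronglyMeasurable
        (ae_of_all _ fun y => ?_)
      rw [Real.norm_eq_abs, abs_mul, abs_of_nonneg (hw_pos y).le,
        abs_of_nonneg (hΔ_nonneg m y (x, l))]
      exact mul_le_mul_of_nonneg_left (hΔ_bdd m y (x, l)) (hw_pos y).le
    have hpt : ∀ y, w y * Δ m y (x, l)
        ≤ |w (y + v) * h₀ (y + v) l - w y * h₀ y l| + C * |w (y + v) - w y| := by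
      intro y
      have habs : |h₀ (y + v) l| ≤ C := hC _ _
      have h1 : w y * Δ m y (x, l) = |w y * h₀ (y + v) l - w y * h₀ y l| := by
        rw [← mul_sub, abs_mul, abs_of_nonneg (hw_pos y).le]
        rfl
      have h2 : |w y * h₀ (y + v) l - w y * h₀ y l|
          ≤ |w (y + v) * h₀ (y + v) l - w y * h₀ y l|
            + |w y - w (y + v)| * |h₀ (y + v) l| := by
        calc |w y * h₀ (y + v) l - w y * h₀ y l|
            = |(w (y + v) * h₀ (y + v) l - w y * h₀ y l)
              + (w y - w (y + v)) * h₀ (y + v) l| := by ring_nf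
        _ ≤ |w (y + v) * h₀ (y + v) l - w y * h₀ y l|
              + |(w y - w (y + v)) * h₀ (y + v) l| := abs_add_le _ _
        _ = |w (y + v) * h₀ (y + v) l - w y * h₀ y l|
              + |w y - w (y + v)| * |h₀ (y + v) l| := by rw [abs_mul]
      have h3 : |w y - w (y + v)| * |h₀ (y + v) l| ≤ C * |w (y + v) - w y| := by
        rw [abs_sub_comm]
        calc |w (y + v) - w y| * |h₀ (y + v) l| ≤ |w (y + v) - w y| * C :=
          mul_le_mul_of_nonneg_left habs (abs_nonneg _)
        _ = C * |w (y + v) - w y| := mul_comm _ _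
      linarith
    calc (∫ y, w y * Δ m y (x, l))
        ≤ ∫ y, (|w (y + v) * h₀ (y + v) l - w y * h₀ y l| + C * |w (y + v) - w y|) :=
          integral_mono hlhs_int (hint1.add (hint2.const_mul C)) hpt
    _ = (∫ y, |w (y + v) * h₀ (y + v) l - w y * h₀ y l|)
          + C * ∫ y, |w (y + v) - w y| := by
        rw [integral_add hint1 (hint2.const_mul C), integral_const_mul]
  -- the weighted global quantity tends to zero
  have hBig_int : ∀ m, Integrable
      (fun q : (Fin d → ℝ) × ((Fin d → ℝ) × ℝ) => w q.1 * (W q.2 * Δ m q.1 q.2))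
      ((volume : Measure (Fin d → ℝ)).prod (volume : Measure ((Fin d → ℝ) × ℝ))) := by
    intro m
    have hprod : Integrable
        (fun q : (Fin d → ℝ) × ((Fin d → ℝ) × ℝ) => w q.1 * W q.2)
        ((volume : Measure (Fin d → ℝ)).prod volume) := hw_int.mul_prod hW_int
    refine (hprod.mul_const (2 * C)).mono'
      (((hw_cont.measurable.comp measurable_fst).mul
        ((hW_cont.measurable.comp measurable_snd).mul (hmeasΔ2 m)))).aestronglyMeasurable
      (ae_of_all _ fun q => ?_)
    rw [Real.norm_eq_abs, abs_of_nonneg (mul_nonneg (hw_pos q.1).le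
      (mul_nonneg (hW_pos q.2).le (hΔ_nonneg m q.1 q.2)))]
    nlinarith [mul_le_mul_of_nonneg_left (hΔ_bdd m q.1 q.2)
      (mul_pos (hw_pos q.1) (hW_pos q.2)).le, hΔ_nonneg m q.1 q.2,
      mul_pos (hw_pos q.1) (hW_pos q.2)]
  have hA : Tendsto (fun m => ∫ y, w y * Φ m y) atTop (𝓝 0) := by
    have hswap : ∀ m, (∫ y, w y * Φ m y)
        = ∫ p, ∫ y, w y * (W p * Δ m y p) := by
      intro m
      have h1 : (fun y => w y * Φ m y) = fun y => ∫ p, w y * (W p * Δ m y p) := by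
        funext y
        rw [hΦdef]
        exact (integral_const_mul (w y) _).symm
      rw [h1]
      exact integral_integral_swap (hBig_int m)
    have hdom : Tendsto (fun m => ∫ p, ∫ y, w y * (W p * Δ m y p)) atTop (𝓝 0) := by
      have h0 : (0 : ℝ) = ∫ p : (Fin d → ℝ) × ℝ, (0 : ℝ) := by simp
      rw [h0]
      refine tendsto_integral_of_dominated_convergence
        (fun p => W p * (2 * C * ∫ y, w y)) ?_ ?_ ?_ ?_
      · intro m
        have : Measurable fun q : ((Fin d → ℝ) × ℝ) × (Fin d → ℝ) =>
            w q.2 * (W q.1 * Δ m q.2 q.1) :=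
          (hw_cont.measurable.comp measurable_snd).mul
            ((hW_cont.measurable.comp measurable_fst).mul
              ((hmeasΔ2 m).comp (measurable_snd.prodMk measurable_fst)))
        exact this.stronglyMeasurable.integral_prod_right'.aestronglyMeasurable
      · exact hW_int.mul_const _
      · intro m
        refine ae_of_all _ fun p => ?_
        have hintp : Integrable fun y => w y * (W p * Δ m y p) := by
          refine (hw_int.mul_const (W p * (2 * C))).mono'
            (hw_cont.measurable.mul ((hW_cont.measurable.comp measurable_const).mul
              ((hmeasΔ2 m).comp
                (measurable_id.prodMk measurable_const)))).aestronglyMeasurable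
            (ae_of_all _ fun y => ?_)
          rw [Real.norm_eq_abs, abs_of_nonneg (mul_nonneg (hw_pos y).le
            (mul_nonneg (hW_pos p).le (hΔ_nonneg m y p)))]
          nlinarith [mul_le_mul_of_nonneg_left (hΔ_bdd m y p)
            (mul_pos (hw_pos y) (hW_pos p)).le, hΔ_nonneg m y p,
            mul_pos (hw_pos y) (hW_pos p)]
        calc ‖∫ y, w y * (W p * Δ m y p)‖ ≤ ∫ y, ‖w y * (W p * Δ m y p)‖ :=
              norm_integral_le_integral_norm _
        _ ≤ ∫ y, w y * (W p * (2 * C)) := by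
              refine integral_mono hintp.norm (hw_int.mul_const _) fun y => ?_
              rw [Real.norm_eq_abs, abs_of_nonneg (mul_nonneg (hw_pos y).le
                (mul_nonneg (hW_pos p).le (hΔ_nonneg m y p)))]
              nlinarith [mul_le_mul_of_nonneg_left (hΔ_bdd m y p)
                (mul_pos (hw_pos y) (hW_pos p)).le, hΔ_nonneg m y p,
                mul_pos (hw_pos y) (hW_pos p)]
        _ = W p * (2 * C * ∫ y, w y) := by rw [integral_mul_const]; ring
      · refine ae_of_all _ fun p => ?_
        have heqp : (fun m => ∫ y, w y * (W p * Δ m y p))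
            = fun m => W p * ∫ y, w y * Δ m y p := by
          funext m
          rw [← integral_const_mul]
          congr 1
          funext y
          ring
        rw [heqp]
        have := (hφ_tendsto p.1 p.2).const_mul (W p)
        simpa using this
    exact hdom.congr fun m => (hswap m).symm
  -- pass to a weighted finite measure and extract an a.e. convergent subsequence
  set ν : Measure (Fin d → ℝ) :=
    volume.withDensity (fun y => ENNReal.ofReal (w y)) with hνdef
  have hwm : Measurable fun y => ENNReal.ofReal (w y) :=
    ENNReal.measurable_ofReal.comp hw_cont.measurable
  have hwΦ_int : ∀ m, Integrable (fun y => w y * Φ m y) := by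
    intro m
    refine (hw_int.mul_const ((∫ p, W p) * (2 * C))).mono'
      (hw_cont.measurable.mul (hΦ_meas m).measurable).aestronglyMeasurable
      (ae_of_all _ fun y => ?_)
    rw [Real.norm_eq_abs, abs_mul, abs_of_nonneg (hw_pos y).le, abs_of_nonneg (hΦ_nonneg m y)]
    exact mul_le_mul_of_nonneg_left (hΦ_bdd m y) (hw_pos y).le
  have heLp : ∀ m, eLpNorm (Φ m) 1 ν = ENNReal.ofReal (∫ y, w y * Φ m y) := by
    intro m
    rw [eLpNorm_one_eq_lintegral_enorm, hνdef,
      lintegral_withDensity_eq_lintegral_mul _ hwm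
        ((hΦ_meas m).measurable.enorm),
      ofReal_integral_eq_lintegral_ofReal (hwΦ_int m)
        (ae_of_all _ fun y => mul_nonneg (hw_pos y).le (hΦ_nonneg m y))]
    refine lintegral_congr fun y => ?_
    simp only [Pi.mul_apply]
    rw [ENNReal.ofReal_mul (hw_pos y).le, Real.enorm_eq_ofReal (hΦ_nonneg m y)]
  have hTIM : TendstoInMeasure ν Φ atTop (fun _ => (0 : ℝ)) := by
    refine tendstoInMeasure_of_tendsto_eLpNorm (p := 1) one_ne_zero
      (fun m => ((hΦ_meas m).aestronglyMeasurable)) aestronglyMeasurable_const ?_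
    have : Tendsto (fun m => ENNReal.ofReal (∫ y, w y * Φ m y)) atTop (𝓝 0) := by
      have := (ENNReal.continuous_ofReal.tendsto 0).comp hA
      simpa [Function.comp_def] using this
    refine this.congr fun m => ?_
    have hsub : Φ m - (fun _ : Fin d → ℝ => (0 : ℝ)) = Φ m := by funext z; simp
    rw [hsub, ← heLp m]
  obtain ⟨ψ, hψmono, hψae⟩ := hTIM.exists_seq_tendsto_ae
  refine ⟨ψ, hψmono, ?_⟩
  rw [hνdef, ae_withDensity_iff hwm] at hψae
  filter_upwards [hψae] with y hy
  have hy' : Tendsto (fun i => Φ (ψ i) y) atTop (𝓝 0) := by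
    have := hy (by simp [ENNReal.ofReal_eq_zero, not_le, hw_pos y])
    simpa using this
  intro K hK
  have hgoal : Tendsto (fun m => ∫ p in K, Δ (ψ m) y p) atTop (𝓝 0) := by
    rcases K.eq_empty_or_nonempty with rfl | hne
    · simpa using (tendsto_const_nhds : Tendsto (fun _ : ℕ => (0 : ℝ)) atTop (𝓝 0))
    obtain ⟨p₀, hp₀K, hp₀min⟩ := hK.exists_isMinOn hne hW_cont.continuousOn
    set c : ℝ := W p₀ with hcdef
    have hc : 0 < c := hW_pos p₀
    have hub : ∀ m, (∫ p in K, Δ (ψ m) y p) ≤ c⁻¹ * Φ (ψ m) y := by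
      intro m
      have hKint : IntegrableOn (fun p => Δ (ψ m) y p) K := by
        refine Integrable.mono' (g := fun _ => 2 * C)
          (integrableOn_const hK.measure_lt_top.ne)
          (hmeasΔ (ψ m) y).aestronglyMeasurable.restrict (ae_of_all _ fun p => ?_)
        rw [Real.norm_eq_abs, abs_of_nonneg (hΔ_nonneg _ y p)]
        exact hΔ_bdd _ y p
      have h1 : (∫ p in K, Δ (ψ m) y p) ≤ ∫ p in K, c⁻¹ * (W p * Δ (ψ m) y p) := by
        refine setIntegral_mono_on hKint
          ((hint_WΔ (ψ m) y).const_mul c⁻¹).integrableOn hK.measurableSet fun p hp => ?_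
        have hcW : c ≤ W p := hp₀min hp
        have h2 : c * Δ (ψ m) y p ≤ W p * Δ (ψ m) y p :=
          mul_le_mul_of_nonneg_right hcW (hΔ_nonneg _ y p)
        have h3 : c⁻¹ * (c * Δ (ψ m) y p) ≤ c⁻¹ * (W p * Δ (ψ m) y p) :=
          mul_le_mul_of_nonneg_left h2 (inv_nonneg.2 hc.le)
        rwa [inv_mul_cancel_left₀ hc.ne'] at h3
      have h2 : (∫ p in K, c⁻¹ * (W p * Δ (ψ m) y p))
          = c⁻¹ * ∫ p in K, W p * Δ (ψ m) y p := integral_const_mul _ _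
      have h3 : (∫ p in K, W p * Δ (ψ m) y p) ≤ Φ (ψ m) y :=
        setIntegral_le_integral (hint_WΔ (ψ m) y)
          (ae_of_all _ fun p => mul_nonneg (hW_pos p).le (hΔ_nonneg _ y p))
      calc (∫ p in K, Δ (ψ m) y p) ≤ ∫ p in K, c⁻¹ * (W p * Δ (ψ m) y p) := h1
      _ = c⁻¹ * ∫ p in K, W p * Δ (ψ m) y p := h2
      _ ≤ c⁻¹ * Φ (ψ m) y := mul_le_mul_of_nonneg_left h3 (inv_nonneg.2 hc.le)
    have hub0 : Tendsto (fun m => c⁻¹ * Φ (ψ m) y) atTop (𝓝 0) := by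
      have := hy'.const_mul c⁻¹
      simpa using this
    refine tendsto_of_tendsto_of_tendsto_of_le_of_le tendsto_const_nhds hub0
      (fun m => setIntegral_nonneg hK.measurableSet fun p _ => hΔ_nonneg _ y p) hub
  exact hgoal
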